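/- For the nullcline h(c) = (Γ/(μK₁)) · c(1+c)/((K+c)(b+c)) with 0 < b, 0 < K, b + K < 1, the derivative dh/dc equals (Γ/(μK₁)) · (c²(b+K−1) + 2bcK + bK)/((K+c)²(b+c)²), and the unique positive critical point is c_M = (bK + √((1−b)b(K−K²)))/(1 − b − K). -/

import Mathlib

/-- Derivative of the `c`-nullcline and its unique positive critical point. -/
theorem atri_nullcline_derivative_and_critical_point
    (b K Γ μ K₁ : ℝ) (hb0 : 0 < b) (hK0 : 0 < K) (hΓ : 0 < Γ) (hμ : 0 < μ)
    (hK₁ : 0 < K₁) (hb1 : b < 1) (hK1 : K < 1) (hbK : b + K < 1) :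
    (∀ c : ℝ, 0 < c →
      HasDerivAt (fun c : ℝ => Γ / (μ * K₁) * (c * (1 + c) / ((K + c) * (b + c))))
        (Γ / (μ * K₁) * ((c ^ 2 * (b + K - 1) + 2 * b * c * K + b * K) /
          ((K + c) ^ 2 * (b + c) ^ 2))) c) ∧
    (∃! c : ℝ, 0 < c ∧
        Γ / (μ * K₁) * ((c ^ 2 * (b + K - 1) + 2 * b * c * K + b * K) /
          ((K + c) ^ 2 * (b + c) ^ 2)) = 0) ∧
    ((b * K + Real.sqrt ((1 - b) * b * (K - K ^ 2))) / (1 - b - K) > 0 ∧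
      Γ / (μ * K₁) *
        ((((b * K + Real.sqrt ((1 - b) * b * (K - K ^ 2))) / (1 - b - K)) ^ 2 * (b + K - 1)
            + 2 * b * ((b * K + Real.sqrt ((1 - b) * b * (K - K ^ 2))) / (1 - b - K)) * K
            + b * K) /
          ((K + (b * K + Real.sqrt ((1 - b) * b * (K - K ^ 2))) / (1 - b - K)) ^ 2 *
            (b + (b * K + Real.sqrt ((1 - b) * b * (K - K ^ 2))) / (1 - b - K)) ^ 2)) = 0) := by
  have hC : Γ / (μ * K₁) ≠ 0 := by positivity
  have hD : 0 < 1 - b - K := by linarith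
  have hDne : (1 - b - K) ≠ 0 := ne_of_gt hD
  set s := Real.sqrt ((1 - b) * b * (K - K ^ 2)) with hs
  have harg : 0 ≤ (1 - b) * b * (K - K ^ 2) := by
    have h1 : 0 ≤ K - K ^ 2 := by nlinarith
    have h2 : 0 ≤ 1 - b := by linarith
    positivity
  have hs2 : s ^ 2 = (1 - b) * b * (K - K ^ 2) := Real.sq_sqrt harg
  have hs0 : 0 ≤ s := Real.sqrt_nonneg _
  have hsgt : b * K < s := by
    by_contra h
    push_neg at h
    have h2 : s * s ≤ (b * K) * (b * K) := mul_self_le_mul_self hs0 h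
    nlinarith [mul_pos (mul_pos hb0 hK0) hD]
  set cM := (b * K + s) / (1 - b - K) with hcM
  have hcM0 : 0 < cM := by
    apply div_pos
    · nlinarith
    · exact hD
  have hquad : cM ^ 2 * (b + K - 1) + 2 * b * cM * K + b * K = 0 := by
    rw [hcM]
    field_simp
    linear_combination (b + K - 1) * hs2
  have h1 : cM * (1 - b - K) = b * K + s := by
    rw [hcM]; field_simp
  have hden : ∀ c : ℝ, 0 < c → (K + c) ^ 2 * (b + c) ^ 2 ≠ 0 := by
    intro c hc; positivity
  constructor
  · intro c hc
    have hg : (K + c) * (b + c) ≠ 0 := by positivity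
    have h0 : HasDerivAt (fun x : ℝ => 1 + x) 1 c := by
      exact (hasDerivAt_id c).const_add (1 : ℝ)
    have hnum : HasDerivAt (fun x : ℝ => x * (1 + x)) (1 * (1 + c) + c * 1) c :=
      (hasDerivAt_id c).mul h0
    have hKc : HasDerivAt (fun x : ℝ => K + x) 1 c := by
      exact (hasDerivAt_id c).const_add (K)
    have hbc : HasDerivAt (fun x : ℝ => b + x) 1 c := by
      exact (hasDerivAt_id c).const_add (b)
    have hgd : HasDerivAt (fun x : ℝ => (K + x) * (b + x))
        (1 * (b + c) + (K + c) * 1) c := hKc.mul hbc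
    have hdiv := (hnum.div hgd hg).const_mul (Γ / (μ * K₁))
    refine hdiv.congr_deriv ?_
    symm
    rw [mul_comm, mul_comm (Γ / (μ * K₁))]
    congr 1
    field_simp
    ring
  · have hPcM : 0 < cM ∧
        Γ / (μ * K₁) * ((cM ^ 2 * (b + K - 1) + 2 * b * cM * K + b * K) /
          ((K + cM) ^ 2 * (b + cM) ^ 2)) = 0 := by
      refine ⟨hcM0, ?_⟩
      rw [hquad, zero_div, mul_zero]
    refine ⟨⟨cM, hPcM, ?_⟩, hPcM.1, hPcM.2⟩
    rintro c ⟨hc, hceq⟩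
    have hd := hden c hc
    have hnum0 : c ^ 2 * (b + K - 1) + 2 * b * c * K + b * K = 0 := by
      rcases mul_eq_zero.mp hceq with h | h
      · exact absurd h hC
      · exact (div_eq_zero_iff.mp h).resolve_right hd
    have key : (cM - c) * ((1 - b - K) * (cM + c) - 2 * b * K) = 0 := by
      linear_combination hnum0 - hquad
    have hpos : (1 - b - K) * (cM + c) - 2 * b * K > 0 := by
      nlinarith [h1, hsgt, mul_pos hD hc]
    rcases mul_eq_zero.mp key with h | h
    · linarith [sub_eq_zero.mp h]
    · linarith
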